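/- The third order Lehmer tensor A with a_{ijk} = min(i,j,k)/max(i,j,k) is a third order positive definite symmetric tensor: for each fixed k, the slice matrix (min(i,j,k)/max(i,j,k))_{i,j} is positive definite. -/

import Mathlib

open Finset

private lemma lehmer_key_le (a b m : ℕ) (hab : a ≤ b) :
    min (min a b) m * (max a m * max b m) = m * min a b * max (max a b) m := by
  rw [min_eq_left hab, max_eq_right hab, ← mul_assoc, min_mul_max, mul_comm a m, mul_assoc]

private lemma lehmer_key (a b m : ℕ) :
    min (min a b) m * (max a m * max b m) = m * min a b * max (max a b) m := by
  rcases le_total a b with h | h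
  · exact lehmer_key_le a b m h
  · rw [min_comm a b, max_comm a b, mul_comm (max a m)]
    exact lehmer_key_le b a m h

private lemma sum_indicator (n c : ℕ) (hc : c < n) (x : ℝ) :
    ∑ t : Fin n, (if t.1 ≤ c then x else 0) = (c + 1 : ℕ) * x := by
  rw [Fin.sum_univ_eq_sum_range (fun t => if t ≤ c then x else 0), ← Finset.sum_filter]
  have h : (Finset.range n).filter (· ≤ c) = Finset.range (c + 1) := by
    ext t; simp only [Finset.mem_filter, Finset.mem_range]; omega
  rw [h, Finset.sum_const, Finset.card_range, nsmul_eq_mul]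

/-- The third order Lehmer tensor `a_{ijk} = min(i,j,k)/max(i,j,k)` (indices
`1,…,n`) is a third order positive definite symmetric tensor: for each fixed
`k`, the slice matrix is positive definite. -/
theorem lehmer_tensor_pos_def (n : ℕ) :
    ∀ k : Fin n,
      Matrix.PosDef (Matrix.of fun i j : Fin n =>
        ((min (min (i.1 + 1) (j.1 + 1)) (k.1 + 1) : ℕ) : ℝ) /
          ((max (max (i.1 + 1) (j.1 + 1)) (k.1 + 1) : ℕ) : ℝ)) := by
  intro k
  set m : ℕ := k.1 + 1 with hm
  have hmpos : (0:ℝ) < m := by positivity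
  set q : Fin n → ℕ := fun i => max (i.1 + 1) m with hq
  have hqpos : ∀ i, (0:ℝ) < q i := by
    intro i
    have : 0 < q i := lt_of_lt_of_le (Nat.succ_pos i.1) (le_max_left _ _)
    exact_mod_cast this
  set v : Fin n → Fin n → ℝ :=
    fun i t => if t.1 ≤ i.1 then Real.sqrt m / q i else 0 with hv
  have entry : ∀ i j : Fin n,
      ((min (min (i.1 + 1) (j.1 + 1)) (k.1 + 1) : ℕ) : ℝ) /
          ((max (max (i.1 + 1) (j.1 + 1)) (k.1 + 1) : ℕ) : ℝ)
        = ∑ t : Fin n, v i t * v j t := by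
    intro i j
    have hsum : ∀ t : Fin n, v i t * v j t
        = (if t.1 ≤ min i.1 j.1 then (m : ℝ) / (q i * q j) else 0) := by
      intro t
      simp only [hv]
      by_cases h1 : t.1 ≤ i.1 <;> by_cases h2 : t.1 ≤ j.1 <;>
        simp [h1, h2, le_min_iff, div_mul_div_comm,
          Real.mul_self_sqrt (le_of_lt hmpos)]
    rw [Finset.sum_congr rfl (fun t _ => hsum t),
      sum_indicator n (min i.1 j.1) (lt_of_le_of_lt (min_le_left _ _) i.2)]
    have key : ((min (min (i.1+1) (j.1+1)) m : ℕ) : ℝ) * ((q i : ℕ) * (q j : ℕ))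
        = ((m : ℕ) : ℝ) * ((min (i.1+1) (j.1+1) : ℕ) : ℝ)
            * ((max (max (i.1+1) (j.1+1)) m : ℕ) : ℝ) := by
      simp only [hq]
      exact_mod_cast congrArg (Nat.cast : ℕ → ℝ) (lehmer_key (i.1 + 1) (j.1 + 1) m)
    have h1 : (0:ℝ) < ((max (max (i.1 + 1) (j.1 + 1)) m : ℕ) : ℝ) := by
      have : 0 < max (max (i.1 + 1) (j.1 + 1)) m := by positivity
      exact_mod_cast this
    have h2 : (0:ℝ) < (q i : ℝ) * (q j : ℝ) := mul_pos (hqpos i) (hqpos j)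
    have hmin : min i.1 j.1 + 1 = min (i.1 + 1) (j.1 + 1) := by omega
    rw [hmin, ← hm, ← mul_div_assoc, div_eq_div_iff h1.ne' h2.ne']
    push_cast at key ⊢
    linear_combination key
  rw [Matrix.posDef_iff_dotProduct_mulVec]
  constructor
  · ext i j
    simp only [Matrix.conjTranspose_apply, Matrix.of_apply, star_trivial]
    rw [min_comm (j.1 + 1) (i.1 + 1), max_comm (j.1 + 1) (i.1 + 1)]
  · intro x hx
    have hQF : dotProduct (star x) ((Matrix.of fun i j : Fin n =>
        ((min (min (i.1 + 1) (j.1 + 1)) (k.1 + 1) : ℕ) : ℝ) /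
          ((max (max (i.1 + 1) (j.1 + 1)) (k.1 + 1) : ℕ) : ℝ)).mulVec x)
        = ∑ t : Fin n, (∑ i : Fin n, x i * v i t) ^ 2 := by
      simp only [dotProduct, Matrix.mulVec, star_trivial, Matrix.of_apply]
      calc ∑ i, x i * ∑ j, (((min (min (i.1 + 1) (j.1 + 1)) (k.1 + 1) : ℕ) : ℝ) /
              ((max (max (i.1 + 1) (j.1 + 1)) (k.1 + 1) : ℕ) : ℝ)) * x j
          = ∑ i, ∑ j, ∑ t, (x i * v i t) * (x j * v j t) := by
            refine Finset.sum_congr rfl fun i _ => ?_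
            rw [Finset.mul_sum]
            refine Finset.sum_congr rfl fun j _ => ?_
            rw [entry i j, Finset.sum_mul, Finset.mul_sum]
            refine Finset.sum_congr rfl fun t _ => ?_
            ring
        _ = ∑ t, ∑ i, ∑ j, (x i * v i t) * (x j * v j t) := by
            calc ∑ i, ∑ j, ∑ t, (x i * v i t) * (x j * v j t)
                = ∑ i, ∑ t, ∑ j, (x i * v i t) * (x j * v j t) :=
                  Finset.sum_congr rfl fun i _ => Finset.sum_comm
              _ = ∑ t, ∑ i, ∑ j, (x i * v i t) * (x j * v j t) := Finset.sum_comm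
        _ = ∑ t, (∑ i, x i * v i t) ^ 2 := by
            refine Finset.sum_congr rfl fun t _ => ?_
            rw [sq, Finset.sum_mul_sum]
    rw [hQF]
    have hS : (Finset.univ.filter fun i => x i ≠ 0).Nonempty := by
      rcases Function.ne_iff.mp hx with ⟨i, hi⟩
      exact ⟨i, by
        simp only [Finset.mem_filter, Finset.mem_univ, true_and]
        simpa using hi⟩
    set i0 := (Finset.univ.filter fun i => x i ≠ 0).max' hS with hi0
    have hxi0 : x i0 ≠ 0 := by
      have := (Finset.univ.filter fun i => x i ≠ 0).max'_mem hS
      simpa using this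
    have hterm : ∑ i : Fin n, x i * v i i0 = x i0 * (Real.sqrt m / q i0) := by
      rw [Finset.sum_eq_single i0]
      · simp [hv]
      · intro i _ hne
        by_cases hle : i0.1 ≤ i.1
        · have hlt : i0 < i := lt_of_le_of_ne (Fin.le_def.mpr hle) (Ne.symm hne)
          have hz : x i = 0 := by
            by_contra hxi
            exact absurd (Finset.le_max' _ i (by simp [hxi])) (not_le.mpr hlt)
          simp [hz]
        · simp only [hv]
          rw [if_neg hle, mul_zero]
      · simp
    refine Finset.sum_pos' (fun t _ => sq_nonneg _) ⟨i0, Finset.mem_univ _, ?_⟩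
    rw [hterm]
    have h1 : x i0 * (Real.sqrt m / q i0) ≠ 0 := by
      apply mul_ne_zero hxi0
      positivity
    positivity
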